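/- Let a < b, let f : ℝ → ℝ → ℝ be continuous and satisfy |f(t,u₁) − f(t,u₂)| ≤ L|u₁ − u₂| for all t ∈ [a,b] and u₁,u₂ ∈ ℝ, and let u : [a,b] → ℝ be continuously differentiable with u'(t) = f(t,u(t)) on [a,b]. Fix reals b₁,…,b₄, c₂, c₃, c₄ and a_{ij} (1 ≤ j < i ≤ 4) with b₁+b₂+b₃+b₄ = 1, a₂₁ = c₂, a₃₁+a₃₂ = c₃, a₄₁+a₄₂+a₄₃ = c₄, and satisfying the fourth-order conditions b₂c₂+b₃c₃+b₄c₄ = 1/2, b₂c₂²+b₃c₃²+b₄c₄² = 1/3, b₂c₂³+b₃c₃³+b₄c₄³ = 1/4, a₃₂b₃c₂+a₄₂b₄c₂+a₄₃b₄c₃ = 1/6, a₃₂b₃c₂c₃+a₄₂b₄c₂c₄+a₄₃b₄c₃c₄ = 1/8, a₃₂b₃c₂²+a₄₂b₄c₂²+a₄₃b₄c₃² = 1/12, a₃₂a₄₃b₄c₂ = 1/24, and fix M ≥ 0. For each N ≥ 1 set h = (b−a)/N, t_n = a + nh, choose shape parameters e_{n,2}, e_{n,3}, e_{n,4} ∈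 ℝ all bounded in absolute value by M, and define v₀ = u(a) and v_{n+1} = v_n + h(b₁k₁ + b₂k₂ + b₃k₃ + b₄k₄), where k₁ = f(t_n, v_n), k₂ = f(t_n + c₂h, v_n·exp(−e_{n,2}(c₂h)²) + h a₂₁ k₁), k₃ = f(t_n + c₃h, v_n·exp(−e_{n,3}(c₃h)²) + h(a₃₁k₁ + a₃₂k₂)), k₄ = f(t_n + c₄h, v_n·exp(−e_{n,4}(c₄h)²) + h(a₄₁k₁ + a₄₂k₂ + a₄₃k₃)). Then max_{0 ≤ n ≤ N} |v_n − u(t_n)| → 0 as N → ∞ (uniformly over all admissible choices of the shape parameters). -/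

import Mathlib

private lemma rbf_abs_exp_sub_one (y : ℝ) : |Real.exp y - 1| ≤ Real.exp |y| - 1 := by
  rcases le_or_gt 0 y with h | h
  · rw [abs_of_nonneg h, abs_of_nonneg (by linarith [Real.one_le_exp h])]
  · rw [abs_of_neg h, abs_of_nonpos (by linarith [Real.exp_lt_one_iff.2 h] : Real.exp y - 1 ≤ 0)]
    have h1 := Real.add_one_le_exp y
    have h2 := Real.add_one_le_exp (-y)
    linarith

private lemma rbf_exp_sub_one_le {x : ℝ} (hx : 0 ≤ x) : Real.exp x - 1 ≤ x * Real.exp x := by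
  have h1 := Real.add_one_le_exp (-x)
  have h2 := Real.exp_pos x
  have h3 : Real.exp (-x) * Real.exp x = 1 := by
    rw [← Real.exp_add]; simp
  nlinarith

private lemma rbf_clamp {a b s t : ℝ} (hab : a ≤ b) (ht : t ∈ Set.Icc a b) :
    max a (min b s) ∈ Set.Icc a b ∧ |s - max a (min b s)| ≤ |s - t| ∧
      |max a (min b s) - t| ≤ |s - t| := by
  obtain ⟨ht1, ht2⟩ := ht
  refine ⟨⟨le_max_left _ _, max_le hab (min_le_left _ _)⟩, ?_, ?_⟩
  · rcases lt_or_ge s a with h1 | h1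
    · rw [min_eq_right (by linarith), max_eq_left (by linarith)]
      rw [abs_of_nonpos (by linarith), abs_of_nonpos (by linarith)]; linarith
    rcases le_or_gt s b with h2 | h2
    · rw [min_eq_right h2, max_eq_right h1]; simp [abs_nonneg]
    · rw [min_eq_left (by linarith), max_eq_right hab]
      rw [abs_of_nonneg (by linarith), abs_of_nonneg (by linarith)]; linarith
  · rcases lt_or_ge s a with h1 | h1
    · rw [min_eq_right (by linarith), max_eq_left (by linarith)]
      rw [abs_of_nonpos (by linarith), abs_of_nonpos (by linarith)]; linarith
    rcases le_or_gt s b with h2 | h2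
    · rw [min_eq_right h2, max_eq_right h1]
    · rw [min_eq_left (by linarith), max_eq_right hab]
      rw [abs_of_nonneg (by linarith), abs_of_nonneg (by linarith)]; linarith

private lemma rbf_mvt {u φ : ℝ → ℝ} {t₁ t₂ c ε : ℝ} (h12 : t₁ ≤ t₂)
    (hd : ∀ x ∈ Set.Icc t₁ t₂, HasDerivAt u (φ x) x)
    (hb : ∀ x ∈ Set.Icc t₁ t₂, |φ x - c| ≤ ε) :
    |u t₂ - u t₁ - (t₂ - t₁) * c| ≤ ε * (t₂ - t₁) := by
  have key := Convex.norm_image_sub_le_of_norm_hasDerivWithin_le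
    (f := fun x => u x - x * c) (f' := fun x => φ x - c) (s := Set.Icc t₁ t₂) (C := ε)
    (fun x hx => (((hd x hx).sub ((hasDerivAt_id x).mul_const c)).hasDerivWithinAt).congr_deriv
      (by ring))
    (fun x hx => by simpa [Real.norm_eq_abs] using hb x hx) (convex_Icc _ _)
    (Set.left_mem_Icc.2 h12) (Set.right_mem_Icc.2 h12)
  rw [Real.norm_eq_abs, Real.norm_eq_abs, abs_of_nonneg (by linarith : (0:ℝ) ≤ t₂ - t₁)] at key
  have heq : u t₂ - u t₁ - (t₂ - t₁) * c = (u t₂ - t₂ * c) - (u t₁ - t₁ * c) := by ring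
  rw [heq]; exact key

set_option maxHeartbeats 1600000 in
private theorem rbf_conv (a b L : ℝ) (hab : a < b)
    (f : ℝ → ℝ → ℝ)
    (hfc : Continuous (fun p : ℝ × ℝ => f p.1 p.2))
    (hlip : ∀ t ∈ Set.Icc a b, ∀ u₁ u₂ : ℝ, |f t u₁ - f t u₂| ≤ L * |u₁ - u₂|)
    (u : ℝ → ℝ)
    (hu : ∀ t ∈ Set.Icc a b, HasDerivAt u (f t (u t)) t)
    (b₁ b₂ b₃ b₄ c₂ c₃ c₄ a₂₁ a₃₁ a₃₂ a₄₁ a₄₂ a₄₃ : ℝ)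
    (hb : b₁ + b₂ + b₃ + b₄ = 1)
    (M : ℝ) (hM : 0 ≤ M) :
    ∀ ε > 0, ∃ N₀ : ℕ, ∀ N : ℕ, N₀ ≤ N → 1 ≤ N →
      ∀ e₂ e₃ e₄ : ℕ → ℝ,
      (∀ n < N, |e₂ n| ≤ M) → (∀ n < N, |e₃ n| ≤ M) → (∀ n < N, |e₄ n| ≤ M) →
      ∀ v k₁ k₂ k₃ k₄ : ℕ → ℝ, v 0 = u a →
      (∀ n < N, k₁ n = f (a + n * ((b - a) / N)) (v n)) →
      (∀ n < N, k₂ n = f (a + n * ((b - a) / N) + c₂ * ((b - a) / N))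
          (v n * Real.exp (-(e₂ n) * (c₂ * ((b - a) / N)) ^ 2)
            + ((b - a) / N) * (a₂₁ * k₁ n))) →
      (∀ n < N, k₃ n = f (a + n * ((b - a) / N) + c₃ * ((b - a) / N))
          (v n * Real.exp (-(e₃ n) * (c₃ * ((b - a) / N)) ^ 2)
            + ((b - a) / N) * (a₃₁ * k₁ n + a₃₂ * k₂ n))) →
      (∀ n < N, k₄ n = f (a + n * ((b - a) / N) + c₄ * ((b - a) / N))
          (v n * Real.exp (-(e₄ n) * (c₄ * ((b - a) / N)) ^ 2)
            + ((b - a) / N) * (a₄₁ * k₁ n + a₄₂ * k₂ n + a₄₃ * k₃ n))) →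
      (∀ n < N,
        v (n + 1) = v n + ((b - a) / N) *
          (b₁ * k₁ n + b₂ * k₂ n + b₃ * k₃ n + b₄ * k₄ n)) →
      ∀ n ≤ N, |v n - u (a + n * ((b - a) / N))| < ε := by
  intro ε hε
  have hba : (0:ℝ) < b - a := sub_pos.2 hab
  have haIcc : a ∈ Set.Icc a b := Set.left_mem_Icc.2 hab.le
  have hL0 : 0 ≤ L := by
    have h := hlip a haIcc 0 1
    have h0 : |(0:ℝ) - 1| = 1 := by norm_num
    rw [h0, mul_one] at h
    exact le_trans (abs_nonneg _) h
  -- constants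
  set C : ℝ := 1 + |b₁| + |b₂| + |b₃| + |b₄| + |c₂| + |c₃| + |c₄| + |a₂₁| + |a₃₁| + |a₃₂|
      + |a₄₁| + |a₄₂| + |a₄₃| with hCdef
  clear_value C
  have hb1 : 0 ≤ |b₁| := abs_nonneg _
  have hb2 : 0 ≤ |b₂| := abs_nonneg _
  have hb3 : 0 ≤ |b₃| := abs_nonneg _
  have hb4 : 0 ≤ |b₄| := abs_nonneg _
  have hc2 : 0 ≤ |c₂| := abs_nonneg _
  have hc3 : 0 ≤ |c₃| := abs_nonneg _
  have hc4 : 0 ≤ |c₄| := abs_nonneg _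
  have ha21' : 0 ≤ |a₂₁| := abs_nonneg _
  have ha31' : 0 ≤ |a₃₁| := abs_nonneg _
  have ha32' : 0 ≤ |a₃₂| := abs_nonneg _
  have ha41' : 0 ≤ |a₄₁| := abs_nonneg _
  have ha42' : 0 ≤ |a₄₂| := abs_nonneg _
  have ha43' : 0 ≤ |a₄₃| := abs_nonneg _
  have hC1 : 1 ≤ C := by
    rw [hCdef]
    linarith only [hb1, hb2, hb3, hb4, hc2, hc3, hc4, ha21', ha31', ha32', ha41', ha42', ha43']
  have hC0 : 0 < C := lt_of_lt_of_le one_pos hC1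
  -- bound on u
  have hucont : ContinuousOn u (Set.Icc a b) := fun t ht =>
    (hu t ht).continuousAt.continuousWithinAt
  obtain ⟨U0, hU0⟩ := isCompact_Icc.exists_bound_of_continuousOn hucont
  set U := |U0| with hUdef
  clear_value U
  have hUnn : 0 ≤ U := by rw [hUdef]; exact abs_nonneg _
  have hU : ∀ t ∈ Set.Icc a b, |u t| ≤ U := by
    intro t ht
    rw [hUdef]
    exact le_trans (by simpa [Real.norm_eq_abs] using hU0 t ht) (le_abs_self U0)
  set R := U + 1 with hRdef
  clear_value R
  have hR1 : 1 ≤ R := by rw [hRdef]; linarith only [hUnn]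
  have hR0 : 0 < R := by linarith only [hR1]
  set E := Real.exp (M * C ^ 2) with hEdef
  clear_value E
  have hE1 : 1 ≤ E := by
    rw [hEdef]; exact Real.one_le_exp (by positivity)
  set ρ := E * R + 1 with hρdef
  clear_value ρ
  have hRρ : R ≤ ρ := by rw [hρdef]; nlinarith only [hE1, hR0]
  have hρ0 : 0 < ρ := by rw [hρdef]; nlinarith only [hE1, hR0]
  set K : Set (ℝ × ℝ) := Set.Icc (a - 1) (b + 1) ×ˢ Set.Icc (-ρ) ρ with hKdef
  have hKc : IsCompact K := isCompact_Icc.prod isCompact_Icc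
  have hfK : ContinuousOn (fun p : ℝ × ℝ => f p.1 p.2) K := hfc.continuousOn
  obtain ⟨F0, hF0b⟩ := hKc.exists_bound_of_continuousOn hfK
  set F := |F0| with hFdef
  clear_value F
  have hFnn : 0 ≤ F := by rw [hFdef]; exact abs_nonneg _
  have hF : ∀ p ∈ K, |f p.1 p.2| ≤ F := by
    intro p hp
    rw [hFdef]
    exact le_trans (by simpa [Real.norm_eq_abs] using hF0b p hp) (le_abs_self F0)
  set Λ := C * (L + 1) with hΛdef
  clear_value Λ
  have hΛ1 : 1 ≤ Λ := by rw [hΛdef]; nlinarith only [hC1, hL0]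
  have hΛ0 : 0 < Λ := by linarith only [hΛ1]
  set P := Real.exp (Λ * (b - a)) with hPdef
  clear_value P
  have hP1 : 1 ≤ P := by
    rw [hPdef]; exact Real.one_le_exp (by nlinarith only [hΛ0, hba])
  have hP0 : 0 < P := by linarith only [hP1]
  set τ := min ε 1 / (2 * P) with hτdef
  clear_value τ
  have hmin0 : 0 < min ε 1 := lt_min hε one_pos
  have hminε : min ε 1 ≤ ε := min_le_left _ _
  have hmin1 : min ε 1 ≤ 1 := min_le_right _ _
  have hτ0 : 0 < τ := by
    rw [hτdef]; exact div_pos hmin0 (by linarith only [hP0])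
  have hPτ : P * τ = min ε 1 / 2 := by
    rw [hτdef]
    rw [← mul_div_assoc,
      div_eq_div_iff (by nlinarith only [hP0] : (2:ℝ) * P ≠ 0) (by norm_num : (2:ℝ) ≠ 0)]
    ring
  set A := R * M * C ^ 2 * E + C * F with hAdef
  clear_value A
  have hA0 : 0 ≤ A := by
    rw [hAdef]
    have p1 : 0 ≤ R * M * C ^ 2 * E :=
      mul_nonneg (mul_nonneg (mul_nonneg hR0.le hM) (sq_nonneg C)) (by linarith only [hE1])
    have p2 : 0 ≤ C * F := mul_nonneg hC0.le hFnn
    linarith only [p1, p2]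
  set τ' := τ / (9 * C) with hτ'def
  clear_value τ'
  have hτ'0 : 0 < τ' := by
    rw [hτ'def]; exact div_pos hτ0 (by linarith only [hC0])
  have hCτ' : C * τ' = τ / 9 := by
    rw [hτ'def]; rw [eq_div_iff (by norm_num : (9:ℝ) ≠ 0)]
    field_simp [hC0.ne']
  -- uniform continuity of f on K
  obtain ⟨δ₁, hδ₁0, hδ₁⟩ := (Metric.uniformContinuousOn_iff_le.1
    (hKc.uniformContinuousOn_of_continuous hfK)) τ' hτ'0
  -- uniform continuity of t ↦ f t (u t) on [a,b]
  have hφcont : ContinuousOn (fun t => f t (u t)) (Set.Icc a b) := by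
    have h1 : ContinuousOn (fun t : ℝ => (t, u t)) (Set.Icc a b) :=
      continuousOn_id.prodMk hucont
    exact hfc.comp_continuousOn h1
  obtain ⟨δ₂, hδ₂0, hδ₂⟩ := (Metric.uniformContinuousOn_iff_le.1
    (isCompact_Icc.uniformContinuousOn_of_continuous hφcont)) (τ / 3)
    (by linarith only [hτ0])
  -- step size thresholds
  set hm := min 1 (min (1 / C) (min (1 / (C * (F + 1)))
      (min (δ₁ / C) (min δ₂ (τ / (3 * (C * L * A + 1))))))) with hmdef
  clear_value hm
  have hCF0 : (0:ℝ) < C * (F + 1) := by nlinarith only [hC0, hFnn]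
  have hCLA0 : (0:ℝ) < 3 * (C * L * A + 1) := by
    nlinarith only [mul_nonneg (mul_nonneg hC0.le hL0) hA0]
  have hm0 : 0 < hm := by
    rw [hmdef]
    exact lt_min one_pos (lt_min (div_pos one_pos hC0) (lt_min (div_pos one_pos hCF0)
      (lt_min (div_pos hδ₁0 hC0) (lt_min hδ₂0 (div_pos hτ0 hCLA0)))))
  obtain ⟨N₁, hN₁⟩ := exists_nat_gt ((b - a) / hm)
  refine ⟨N₁, ?_⟩
  intro N hNN₁ hN1 e₂ e₃ e₄ he₂ he₃ he₄ v k₁ k₂ k₃ k₄ hv0 hk1 hk2 hk3 hk4 hstep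
  set h := (b - a) / (N : ℝ) with hhdef
  clear_value h
  have hN0 : (0:ℝ) < N := by exact_mod_cast hN1
  have hh0 : 0 < h := by rw [hhdef]; exact div_pos hba hN0
  have hhm : h ≤ hm := by
    have h1 : ((N₁ : ℝ)) ≤ N := Nat.cast_le.2 hNN₁
    have h2 : (b - a) / hm < N := lt_of_lt_of_le hN₁ h1
    rw [div_lt_iff₀ hm0] at h2
    rw [hhdef, div_le_iff₀ hN0]
    nlinarith only [h2]
  rw [hmdef] at hhm
  have hh1 : h ≤ 1 := le_trans hhm (min_le_left _ _)
  have hhC : C * h ≤ 1 := by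
    have h1 := le_trans hhm (le_trans (min_le_right _ _) (min_le_left _ _))
    rw [le_div_iff₀ hC0] at h1; linarith only [h1]
  have hhCF : C * h * (F + 1) ≤ 1 := by
    have h1 := le_trans hhm (le_trans (min_le_right _ _)
      (le_trans (min_le_right _ _) (min_le_left _ _)))
    rw [le_div_iff₀ hCF0] at h1
    nlinarith only [h1]
  have hhδ₁ : C * h ≤ δ₁ := by
    have h1 := le_trans hhm (le_trans (min_le_right _ _) (le_trans (min_le_right _ _)
      (le_trans (min_le_right _ _) (min_le_left _ _))))
    rw [le_div_iff₀ hC0] at h1; linarith only [h1]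
  have hhδ₂ : h ≤ δ₂ := le_trans hhm (le_trans (min_le_right _ _)
    (le_trans (min_le_right _ _) (le_trans (min_le_right _ _)
      (le_trans (min_le_right _ _) (min_le_left _ _)))))
  have hhτ : C * L * A * h ≤ τ / 3 := by
    have h1 := le_trans hhm (le_trans (min_le_right _ _) (le_trans (min_le_right _ _)
      (le_trans (min_le_right _ _) (le_trans (min_le_right _ _) (min_le_right _ _)))))
    rw [le_div_iff₀ hCLA0] at h1
    nlinarith only [h1, mul_nonneg (mul_nonneg (mul_nonneg hC0.le hL0) hA0) hh0.le, hh0]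
  have hNh : (N : ℝ) * h = b - a := by
    rw [hhdef]; field_simp
  have htmem : ∀ n : ℕ, n ≤ N → a + n * h ∈ Set.Icc a b := by
    intro n hn
    have h1 : (0:ℝ) ≤ n := Nat.cast_nonneg n
    have h2 : (n:ℝ) ≤ N := Nat.cast_le.2 hn
    constructor
    · nlinarith only [h1, hh0]
    · nlinarith only [h2, hh0, hNh]
  -- the one-step estimate
  have key : ∀ n, n < N → |v n - u (a + n * h)| ≤ 1 →
      |v (n + 1) - u (a + ((n:ℝ) + 1) * h)| ≤ (1 + h * Λ) * |v n - u (a + n * h)| + h * τ := by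
    intro n hn hδle
    set δ := |v n - u (a + n * h)| with hδdef
    clear_value δ
    have hδ0 : 0 ≤ δ := hδdef ▸ abs_nonneg _
    set tn := a + n * h with htndef
    clear_value tn
    have htn : tn ∈ Set.Icc a b := htndef ▸ htmem n hn.le
    set us := u tn with husdef
    clear_value us
    have hus : |us| ≤ U := husdef ▸ hU tn htn
    have hvb : |v n| ≤ R := by
      have h1 : |v n| ≤ |v n - us| + |us| := by
        calc |v n| = |(v n - us) + us| := by norm_num
        _ ≤ |v n - us| + |us| := abs_add_le _ _
      have h2 : |v n - us| = δ := by rw [hδdef, husdef, htndef]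
      rw [h2] at h1
      rw [hRdef]
      linarith only [h1, hδle, hus]
    have htnK : tn ∈ Set.Icc (a - 1) (b + 1) :=
      ⟨by linarith only [htn.1], by linarith only [htn.2]⟩
    have hvρ : |v n| ≤ ρ := le_trans hvb hRρ
    have husρ : |us| ≤ ρ := le_trans hus (by rw [hρdef, hRdef] at *; nlinarith only [hE1, hUnn])
    have htnusK : (tn, us) ∈ K := Set.mem_prod.2 ⟨htnK, Set.mem_Icc.2 (abs_le.1 husρ)⟩
    -- general estimate for stages 2–4
    have stage : ∀ (c e S : ℝ), |c| ≤ C → |e| ≤ M → |S| ≤ C * F →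
        |f (tn + c * h) (v n * Real.exp (-e * (c * h) ^ 2) + h * S)| ≤ F ∧
        |f (tn + c * h) (v n * Real.exp (-e * (c * h) ^ 2) + h * S) - f tn us|
          ≤ 2 * τ' + L * (δ + h * A) := by
      intro c e S hc he hS
      set x := -e * (c * h) ^ 2 with hxdef
      clear_value x
      have hch : |c * h| ≤ C * h := by
        rw [abs_mul, abs_of_pos hh0]
        exact mul_le_mul_of_nonneg_right hc hh0.le
      have hx : |x| ≤ M * C ^ 2 * h ^ 2 := by
        rw [hxdef]
        have h1 : |(-e) * (c * h) ^ 2| = |e| * (c * h) ^ 2 := by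
          rw [abs_mul, abs_neg, abs_of_nonneg (sq_nonneg (c * h))]
        rw [h1]
        have h2 : (c * h) ^ 2 ≤ (C * h) ^ 2 := by
          have h3 := abs_nonneg (c * h)
          nlinarith only [hch, h3, sq_abs (c * h)]
        nlinarith only [h2, he, sq_nonneg (c * h), abs_nonneg e, hM]
      have hxM : |x| ≤ M * C ^ 2 := by
        have hq : h ^ 2 ≤ 1 := by nlinarith only [hh0, hh1]
        nlinarith only [hx, hq, mul_nonneg hM (sq_nonneg C)]
      have hexp_le : Real.exp x ≤ E := by
        rw [hEdef]; exact Real.exp_le_exp.2 (le_trans (le_abs_self x) hxM)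
      have hexp0 : 0 < Real.exp x := Real.exp_pos x
      set w := v n * Real.exp x + h * S with hwdef
      clear_value w
      have hwρ : |w| ≤ ρ := by
        have h1 : |v n * Real.exp x| ≤ R * E := by
          rw [abs_mul, abs_of_pos hexp0]
          exact mul_le_mul hvb hexp_le hexp0.le hR0.le
        have h2 : |h * S| ≤ h * (C * F) := by
          rw [abs_mul, abs_of_pos hh0]
          exact mul_le_mul_of_nonneg_left hS hh0.le
        have h3 : |w| ≤ |v n * Real.exp x| + |h * S| := hwdef ▸ abs_add_le _ _
        have h4 : h * (C * F) ≤ 1 := by nlinarith only [hhCF, hh0, hC0, hFnn]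
        rw [hρdef]
        nlinarith only [h1, h2, h3, h4]
      have htc : tn + c * h ∈ Set.Icc (a - 1) (b + 1) := by
        have h1 := abs_le.1 hch
        constructor
        · nlinarith only [htn.1, h1.1, hhC]
        · nlinarith only [htn.2, h1.2, hhC]
      have hmem1 : (tn + c * h, w) ∈ K := Set.mem_prod.2 ⟨htc, Set.mem_Icc.2 (abs_le.1 hwρ)⟩
      have hkF : |f (tn + c * h) w| ≤ F := hF _ hmem1
      refine ⟨hkF, ?_⟩
      obtain ⟨hπmem, hπd1, hπd2⟩ := rbf_clamp (s := tn + c * h) hab.le htn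
      set π := max a (min b (tn + c * h)) with hπdef
      have hπK : π ∈ Set.Icc (a - 1) (b + 1) :=
        ⟨by linarith only [hπmem.1], by linarith only [hπmem.2]⟩
      have hd0 : |(tn + c * h) - tn| = |c * h| := by norm_num
      rw [hd0] at hπd1 hπd2
      have hπwK : (π, w) ∈ K := Set.mem_prod.2 ⟨hπK, Set.mem_Icc.2 (abs_le.1 hwρ)⟩
      have hπusK : (π, us) ∈ K := Set.mem_prod.2 ⟨hπK, Set.mem_Icc.2 (abs_le.1 husρ)⟩
      have hT1 : |f (tn + c * h) w - f π w| ≤ τ' := by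
        have hd : dist ((tn + c * h, w) : ℝ × ℝ) (π, w) ≤ δ₁ := by
          rw [Prod.dist_eq]
          apply max_le
          · rw [Real.dist_eq]; exact le_trans hπd1 (le_trans hch hhδ₁)
          · rw [Real.dist_eq]; simp [hδ₁0.le]
        have hdd := hδ₁ (tn + c * h, w) hmem1 (π, w) hπwK hd
        simpa [Real.dist_eq] using hdd
      have hT3 : |f π us - f tn us| ≤ τ' := by
        have hd : dist ((π, us) : ℝ × ℝ) (tn, us) ≤ δ₁ := by
          rw [Prod.dist_eq]
          apply max_le
          · rw [Real.dist_eq]; exact le_trans hπd2 (le_trans hch hhδ₁)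
          · rw [Real.dist_eq]; simp [hδ₁0.le]
        have hdd := hδ₁ (π, us) hπusK (tn, us) htnusK hd
        simpa [Real.dist_eq] using hdd
      have hT2 : |f π w - f π us| ≤ L * |w - us| := hlip π hπmem w us
      have hwus : |w - us| ≤ δ + h * A := by
        have h1 : w - us = v n * (Real.exp x - 1) + (v n - us) + h * S := by
          rw [hwdef]; ring
        have h2 : |Real.exp x - 1| ≤ (M * C ^ 2 * h ^ 2) * E := by
          have h3 := rbf_abs_exp_sub_one x
          have h4 := rbf_exp_sub_one_le (abs_nonneg x)
          have h5 : Real.exp |x| ≤ E := by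
            rw [hEdef]; exact Real.exp_le_exp.2 hxM
          have h6 : |x| * Real.exp |x| ≤ (M * C ^ 2 * h ^ 2) * E := by
            apply mul_le_mul hx h5 (Real.exp_pos _).le
            exact mul_nonneg (mul_nonneg hM (sq_nonneg C)) (sq_nonneg h)
          linarith only [h3, h4, h6]
        have h7 : |v n * (Real.exp x - 1)| ≤ R * ((M * C ^ 2 * h ^ 2) * E) := by
          rw [abs_mul]
          exact mul_le_mul hvb h2 (abs_nonneg _) hR0.le
        have h8 : |h * S| ≤ h * (C * F) := by
          rw [abs_mul, abs_of_pos hh0]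
          exact mul_le_mul_of_nonneg_left hS hh0.le
        have h9 : |w - us| ≤ |v n * (Real.exp x - 1)| + |v n - us| + |h * S| := by
          rw [h1]
          refine le_trans (abs_add_le _ _) ?_
          linarith only [abs_add_le (v n * (Real.exp x - 1)) (v n - us)]
        have h10 : R * ((M * C ^ 2 * h ^ 2) * E) ≤ h * (R * M * C ^ 2 * E) := by
          have hq : h ^ 2 ≤ h := by nlinarith only [hh0, hh1]
          have hnn : 0 ≤ R * M * C ^ 2 * E :=
            mul_nonneg (mul_nonneg (mul_nonneg hR0.le hM) (sq_nonneg C))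
              (by linarith only [hE1])
          nlinarith only [hq, hnn, hR0, hM, sq_nonneg C, hE1]
        have h11 : |v n - us| = δ := by rw [hδdef, husdef, htndef]
        rw [h11] at h9
        rw [hAdef]
        nlinarith only [h7, h8, h9, h10, hh0]
      calc |f (tn + c * h) w - f tn us|
          = |(f (tn + c * h) w - f π w) + (f π w - f π us) + (f π us - f tn us)| := by
            norm_num
        _ ≤ |(f (tn + c * h) w - f π w) + (f π w - f π us)| + |f π us - f tn us| :=
            abs_add_le _ _
        _ ≤ |f (tn + c * h) w - f π w| + |f π w - f π us| + |f π us - f tn us| := by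
            linarith only [abs_add_le (f (tn + c * h) w - f π w) (f π w - f π us)]
        _ ≤ τ' + L * (δ + h * A) + τ' := by
            have hh2 := mul_le_mul_of_nonneg_left hwus hL0
            linarith only [hT1, hT3, le_trans hT2 hh2]
        _ = 2 * τ' + L * (δ + h * A) := by ring
    -- stage 1
    have htnvK : (tn, v n) ∈ K := Set.mem_prod.2 ⟨htnK, Set.mem_Icc.2 (abs_le.1 hvρ)⟩
    have hk1' := hk1 n hn
    rw [← htndef] at hk1'
    have hk1F : |k₁ n| ≤ F := by rw [hk1']; exact hF (tn, v n) htnvK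
    have hDnn : 0 ≤ 2 * τ' + L * (δ + h * A) := by
      have h1 : 0 ≤ L * (δ + h * A) :=
        mul_nonneg hL0 (by nlinarith only [hδ0, hh0, hA0])
      linarith only [h1, hτ'0]
    have hk1d : |k₁ n - f tn us| ≤ 2 * τ' + L * (δ + h * A) := by
      rw [hk1']
      have h1 := hlip tn htn (v n) us
      have h2 : |v n - us| = δ := by rw [hδdef, husdef, htndef]
      rw [h2] at h1
      nlinarith only [h1, hτ'0, mul_nonneg hL0 (mul_nonneg hh0.le hA0)]
    -- coefficient bounds
    have hcC2 : |c₂| ≤ C := by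
      rw [hCdef]
      linarith only [hb1, hb2, hb3, hb4, hc3, hc4, ha21', ha31', ha32', ha41', ha42', ha43']
    have hcC3 : |c₃| ≤ C := by
      rw [hCdef]
      linarith only [hb1, hb2, hb3, hb4, hc2, hc4, ha21', ha31', ha32', ha41', ha42', ha43']
    have hcC4 : |c₄| ≤ C := by
      rw [hCdef]
      linarith only [hb1, hb2, hb3, hb4, hc2, hc3, ha21', ha31', ha32', ha41', ha42', ha43']
    -- stage 2
    have hS2 : |a₂₁ * k₁ n| ≤ C * F := by
      rw [abs_mul]
      have h1 : |a₂₁| ≤ C := by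
        rw [hCdef]
        linarith only [hb1, hb2, hb3, hb4, hc2, hc3, hc4, ha31', ha32', ha41', ha42', ha43']
      exact mul_le_mul h1 hk1F (abs_nonneg _) hC0.le
    have hk2' := hk2 n hn
    rw [← htndef] at hk2'
    have hst2 := stage c₂ (e₂ n) (a₂₁ * k₁ n) hcC2 (he₂ n hn) hS2
    rw [← hk2'] at hst2
    obtain ⟨hk2F, hk2d⟩ := hst2
    -- stage 3
    have hS3 : |a₃₁ * k₁ n + a₃₂ * k₂ n| ≤ C * F := by
      have h1 : |a₃₁ * k₁ n + a₃₂ * k₂ n| ≤ |a₃₁| * |k₁ n| + |a₃₂| * |k₂ n| := by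
        refine le_trans (abs_add_le _ _) ?_
        rw [abs_mul, abs_mul]
      have h2 : |a₃₁| * |k₁ n| ≤ |a₃₁| * F := mul_le_mul_of_nonneg_left hk1F ha31'
      have h3 : |a₃₂| * |k₂ n| ≤ |a₃₂| * F := mul_le_mul_of_nonneg_left hk2F ha32'
      have h4 : (|a₃₁| + |a₃₂|) * F ≤ C * F := by
        apply mul_le_mul_of_nonneg_right _ hFnn
        rw [hCdef]
        linarith only [hb1, hb2, hb3, hb4, hc2, hc3, hc4, ha21', ha41', ha42', ha43']
      nlinarith only [h1, h2, h3, h4]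
    have hk3' := hk3 n hn
    rw [← htndef] at hk3'
    have hst3 := stage c₃ (e₃ n) (a₃₁ * k₁ n + a₃₂ * k₂ n) hcC3 (he₃ n hn) hS3
    rw [← hk3'] at hst3
    obtain ⟨hk3F, hk3d⟩ := hst3
    -- stage 4
    have hS4 : |a₄₁ * k₁ n + a₄₂ * k₂ n + a₄₃ * k₃ n| ≤ C * F := by
      have h1 : |a₄₁ * k₁ n + a₄₂ * k₂ n + a₄₃ * k₃ n|
          ≤ |a₄₁| * |k₁ n| + |a₄₂| * |k₂ n| + |a₄₃| * |k₃ n| := by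
        refine le_trans (abs_add_le _ _) ?_
        rw [abs_mul]
        have h0 := abs_add_le (a₄₁ * k₁ n) (a₄₂ * k₂ n)
        rw [abs_mul, abs_mul] at h0
        linarith only [h0]
      have h2 : |a₄₁| * |k₁ n| ≤ |a₄₁| * F := mul_le_mul_of_nonneg_left hk1F ha41'
      have h3 : |a₄₂| * |k₂ n| ≤ |a₄₂| * F := mul_le_mul_of_nonneg_left hk2F ha42'
      have h4 : |a₄₃| * |k₃ n| ≤ |a₄₃| * F := mul_le_mul_of_nonneg_left hk3F ha43'
      have h5 : (|a₄₁| + |a₄₂| + |a₄₃|) * F ≤ C * F := by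
        apply mul_le_mul_of_nonneg_right _ hFnn
        rw [hCdef]
        linarith only [hb1, hb2, hb3, hb4, hc2, hc3, hc4, ha21', ha31', ha32']
      nlinarith only [h1, h2, h3, h4, h5]
    have hk4' := hk4 n hn
    rw [← htndef] at hk4'
    have hst4 := stage c₄ (e₄ n) (a₄₁ * k₁ n + a₄₂ * k₂ n + a₄₃ * k₃ n) hcC4
      (he₄ n hn) hS4
    rw [← hk4'] at hst4
    obtain ⟨hk4F, hk4d⟩ := hst4
    -- combined increment estimate
    set D := 2 * τ' + L * (δ + h * A) with hDdef
    clear_value D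
    have hΦ : |b₁ * k₁ n + b₂ * k₂ n + b₃ * k₃ n + b₄ * k₄ n - f tn us|
        ≤ Λ * δ + (2 * τ / 9 + τ / 3) := by
      have heq : b₁ * k₁ n + b₂ * k₂ n + b₃ * k₃ n + b₄ * k₄ n - f tn us
          = b₁ * (k₁ n - f tn us) + b₂ * (k₂ n - f tn us) + b₃ * (k₃ n - f tn us)
            + b₄ * (k₄ n - f tn us) := by
        linear_combination hb * f tn us
      have h1 : |b₁ * (k₁ n - f tn us) + b₂ * (k₂ n - f tn us) + b₃ * (k₃ n - f tn us)
          + b₄ * (k₄ n - f tn us)|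
          ≤ |b₁| * |k₁ n - f tn us| + |b₂| * |k₂ n - f tn us| + |b₃| * |k₃ n - f tn us|
            + |b₄| * |k₄ n - f tn us| := by
        have t1 := abs_add_le (b₁ * (k₁ n - f tn us) + b₂ * (k₂ n - f tn us)
          + b₃ * (k₃ n - f tn us)) (b₄ * (k₄ n - f tn us))
        have t2 := abs_add_le (b₁ * (k₁ n - f tn us) + b₂ * (k₂ n - f tn us))
          (b₃ * (k₃ n - f tn us))
        have t3 := abs_add_le (b₁ * (k₁ n - f tn us)) (b₂ * (k₂ n - f tn us))
        rw [abs_mul b₄] at t1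
        rw [abs_mul b₃] at t2
        rw [abs_mul b₁, abs_mul b₂] at t3
        linarith only [t1, t2, t3]
      have h2 : |b₁| * |k₁ n - f tn us| ≤ |b₁| * D := mul_le_mul_of_nonneg_left hk1d hb1
      have h3 : |b₂| * |k₂ n - f tn us| ≤ |b₂| * D := mul_le_mul_of_nonneg_left hk2d hb2
      have h4 : |b₃| * |k₃ n - f tn us| ≤ |b₃| * D := mul_le_mul_of_nonneg_left hk3d hb3
      have h5 : |b₄| * |k₄ n - f tn us| ≤ |b₄| * D := mul_le_mul_of_nonneg_left hk4d hb4
      have h6 : (|b₁| + |b₂| + |b₃| + |b₄|) * D ≤ C * D := by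
        apply mul_le_mul_of_nonneg_right _ hDnn
        rw [hCdef]
        linarith only [hc2, hc3, hc4, ha21', ha31', ha32', ha41', ha42', ha43']
      have h7 : C * D ≤ Λ * δ + (2 * τ / 9 + τ / 3) := by
        have e1 : C * D = 2 * (C * τ') + C * L * δ + C * L * (h * A) := by
          rw [hDdef]; ring
        rw [e1, hCτ']
        have e2 : C * L * δ ≤ Λ * δ := by
          apply mul_le_mul_of_nonneg_right _ hδ0
          rw [hΛdef]
          nlinarith only [hC0, hL0]
        have e3 : C * L * (h * A) ≤ τ / 3 := by
          have e4 : C * L * (h * A) = C * L * A * h := by ring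
          rw [e4]; exact hhτ
        linarith only [e2, e3]
      rw [heq]
      calc |b₁ * (k₁ n - f tn us) + b₂ * (k₂ n - f tn us) + b₃ * (k₃ n - f tn us)
          + b₄ * (k₄ n - f tn us)|
          ≤ |b₁| * |k₁ n - f tn us| + |b₂| * |k₂ n - f tn us| + |b₃| * |k₃ n - f tn us|
            + |b₄| * |k₄ n - f tn us| := h1
        _ ≤ (|b₁| + |b₂| + |b₃| + |b₄|) * D := by linarith only [h2, h3, h4, h5]
        _ ≤ C * D := h6
        _ ≤ Λ * δ + (2 * τ / 9 + τ / 3) := h7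
    -- consistency estimate
    have htn1 : tn + h ≤ b := by
      have h1 := htmem (n + 1) hn
      have h2 : a + ((n : ℝ) + 1) * h = tn + h := by rw [htndef]; ring
      have h3 : ((n + 1 : ℕ) : ℝ) = (n : ℝ) + 1 := by push_cast; ring
      have h4 := h1.2
      rw [h3, h2] at h4
      exact h4
    have hcons : |u (a + ((n:ℝ) + 1) * h) - u tn - h * f tn us| ≤ τ / 3 * h := by
      have he : a + ((n:ℝ) + 1) * h = tn + h := by rw [htndef]; ring
      rw [he]
      have h12 : tn ≤ tn + h := by linarith only [hh0]
      have hsub : Set.Icc tn (tn + h) ⊆ Set.Icc a b :=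
        Set.Icc_subset_Icc htn.1 htn1
      have hd : ∀ x ∈ Set.Icc tn (tn + h), HasDerivAt u (f x (u x)) x :=
        fun x hx => hu x (hsub hx)
      have hbnd : ∀ x ∈ Set.Icc tn (tn + h), |f x (u x) - f tn us| ≤ τ / 3 := by
        intro x hx
        have hx1 : x ∈ Set.Icc a b := hsub hx
        have hd2 : dist x tn ≤ δ₂ := by
          rw [Real.dist_eq, abs_of_nonneg (by linarith only [hx.1] : 0 ≤ x - tn)]
          linarith only [hx.2, hhδ₂]
        have hdd := hδ₂ x hx1 tn htn hd2
        rw [husdef]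
        simpa [Real.dist_eq] using hdd
      have hmvt := rbf_mvt h12 hd hbnd
      have he2 : tn + h - tn = h := by ring
      rw [he2] at hmvt
      linarith only [hmvt]
    -- assemble
    have hstepn := hstep n hn
    have hsplit : v (n + 1) - u (a + ((n:ℝ) + 1) * h)
        = ((v n - us) + h * ((b₁ * k₁ n + b₂ * k₂ n + b₃ * k₃ n + b₄ * k₄ n) - f tn us))
          + (-(u (a + ((n:ℝ) + 1) * h) - u tn - h * f tn us)) := by
      rw [hstepn, husdef]; ring
    have t2 := abs_add_le ((v n - us) + h * ((b₁ * k₁ n + b₂ * k₂ n + b₃ * k₃ n + b₄ * k₄ n)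
      - f tn us)) (-(u (a + ((n:ℝ) + 1) * h) - u tn - h * f tn us))
    have t3 := abs_add_le (v n - us) (h * ((b₁ * k₁ n + b₂ * k₂ n + b₃ * k₃ n + b₄ * k₄ n)
      - f tn us))
    have t4 : |h * ((b₁ * k₁ n + b₂ * k₂ n + b₃ * k₃ n + b₄ * k₄ n) - f tn us)|
        ≤ h * (Λ * δ + (2 * τ / 9 + τ / 3)) := by
      rw [abs_mul, abs_of_pos hh0]
      exact mul_le_mul_of_nonneg_left hΦ hh0.le
    have t5 : |v n - us| = δ := by rw [hδdef, husdef, htndef]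
    rw [t5] at t3
    rw [abs_neg] at t2
    rw [hsplit]
    have hfinal : δ + h * (Λ * δ + (2 * τ / 9 + τ / 3)) + τ / 3 * h
        ≤ (1 + h * Λ) * δ + h * τ := by nlinarith only [hh0, hτ0]
    calc |((v n - us) + h * ((b₁ * k₁ n + b₂ * k₂ n + b₃ * k₃ n + b₄ * k₄ n) - f tn us))
        + (-(u (a + ((n:ℝ) + 1) * h) - u tn - h * f tn us))|
        ≤ δ + h * (Λ * δ + (2 * τ / 9 + τ / 3)) + τ / 3 * h := by
          linarith only [t2, t3, t4, hcons]
      _ ≤ (1 + h * Λ) * δ + h * τ := hfinal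
  -- Grönwall cap
  have hcap : ∀ n : ℕ, n ≤ N → ((1 + h * Λ) ^ n - 1) * τ / Λ ≤ min ε 1 / 2 := by
    intro n hn
    have h1 : (1 + h * Λ) ≤ Real.exp (h * Λ) := by
      linarith only [Real.add_one_le_exp (h * Λ)]
    have hnn : (0:ℝ) ≤ 1 + h * Λ := by nlinarith only [hh0, hΛ0]
    have h2 : (1 + h * Λ) ^ n ≤ Real.exp (h * Λ) ^ n := pow_le_pow_left₀ hnn h1 n
    have h3 : Real.exp (h * Λ) ^ n = Real.exp ((n:ℝ) * (h * Λ)) := by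
      rw [← Real.exp_nat_mul]
    have h4 : (n:ℝ) * h ≤ b - a := by
      have h5 : (n:ℝ) ≤ N := Nat.cast_le.2 hn
      nlinarith only [h5, hh0, hNh]
    have h6 : (n:ℝ) * (h * Λ) ≤ Λ * (b - a) := by nlinarith only [h4, hΛ0]
    have h7 : (1 + h * Λ) ^ n ≤ P := by
      rw [hPdef]
      exact le_trans h2 (by rw [h3]; exact Real.exp_le_exp.2 h6)
    rw [div_le_iff₀ hΛ0]
    have h8 : ((1 + h * Λ) ^ n - 1) * τ ≤ (P - 1) * τ := by
      nlinarith only [h7, hτ0]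
    have h9 : (P - 1) * τ = min ε 1 / 2 - τ := by
      rw [← hPτ]; ring
    nlinarith only [h8, h9, hmin0, hτ0, hΛ1]
  have main : ∀ n, n ≤ N → |v n - u (a + n * h)| ≤ ((1 + h * Λ) ^ n - 1) * τ / Λ := by
    intro n
    induction n with
    | zero =>
      intro _
      simp only [Nat.cast_zero, zero_mul, add_zero, hv0, pow_zero]
      simp
    | succ n ih =>
      intro hn1
      have hn : n < N := hn1
      have ihb := ih hn.le
      have hδ1 : |v n - u (a + n * h)| ≤ 1 := by
        have hcc := hcap n hn.le
        linarith only [ihb, hcc, hmin1]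
      have hk := key n hn hδ1
      have hnn : (0:ℝ) ≤ 1 + h * Λ := by nlinarith only [hh0, hΛ0]
      have hmono : (1 + h * Λ) * |v n - u (a + n * h)|
          ≤ (1 + h * Λ) * (((1 + h * Λ) ^ n - 1) * τ / Λ) :=
        mul_le_mul_of_nonneg_left ihb hnn
      have heq : (1 + h * Λ) * (((1 + h * Λ) ^ n - 1) * τ / Λ) + h * τ
          = ((1 + h * Λ) ^ (n + 1) - 1) * τ / Λ := by
        field_simp [hΛ0.ne']
        ring
      have hcast : ((n + 1 : ℕ) : ℝ) = ((n:ℝ) + 1) := by push_cast; ring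
      calc |v (n + 1) - u (a + ((n + 1 : ℕ) : ℝ) * h)|
          = |v (n + 1) - u (a + ((n:ℝ) + 1) * h)| := by rw [hcast]
        _ ≤ (1 + h * Λ) * |v n - u (a + n * h)| + h * τ := hk
        _ ≤ (1 + h * Λ) * (((1 + h * Λ) ^ n - 1) * τ / Λ) + h * τ := by
            linarith only [hmono]
        _ = ((1 + h * Λ) ^ (n + 1) - 1) * τ / Λ := heq
  intro n hn
  have h1 := (main n hn).trans (hcap n hn)
  have h2 : min ε 1 / 2 < ε := by linarith only [hmin0, hminε]
  linarith only [h1, h2]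

/-- Convergence of the four-stage RBF Runge–Kutta method with bounded shape
parameters, uniformly over all admissible choices of the shape parameters. -/
theorem stmt_9 (a b L : ℝ) (hab : a < b)
    (f : ℝ → ℝ → ℝ)
    (hfc : Continuous (fun p : ℝ × ℝ => f p.1 p.2))
    (hlip : ∀ t ∈ Set.Icc a b, ∀ u₁ u₂ : ℝ, |f t u₁ - f t u₂| ≤ L * |u₁ - u₂|)
    (u : ℝ → ℝ)
    (hu : ∀ t ∈ Set.Icc a b, HasDerivAt u (f t (u t)) t)
    (b₁ b₂ b₃ b₄ c₂ c₃ c₄ a₂₁ a₃₁ a₃₂ a₄₁ a₄₂ a₄₃ : ℝ)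
    (hb : b₁ + b₂ + b₃ + b₄ = 1)
    (ha21 : a₂₁ = c₂) (ha3 : a₃₁ + a₃₂ = c₃) (ha4 : a₄₁ + a₄₂ + a₄₃ = c₄)
    (hoc1 : b₂ * c₂ + b₃ * c₃ + b₄ * c₄ = 1 / 2)
    (hoc2 : b₂ * c₂ ^ 2 + b₃ * c₃ ^ 2 + b₄ * c₄ ^ 2 = 1 / 3)
    (hoc3 : b₂ * c₂ ^ 3 + b₃ * c₃ ^ 3 + b₄ * c₄ ^ 3 = 1 / 4)
    (hoc4 : a₃₂ * b₃ * c₂ + a₄₂ * b₄ * c₂ + a₄₃ * b₄ * c₃ = 1 / 6)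
    (hoc5 : a₃₂ * b₃ * c₂ * c₃ + a₄₂ * b₄ * c₂ * c₄ + a₄₃ * b₄ * c₃ * c₄ = 1 / 8)
    (hoc6 : a₃₂ * b₃ * c₂ ^ 2 + a₄₂ * b₄ * c₂ ^ 2 + a₄₃ * b₄ * c₃ ^ 2 = 1 / 12)
    (hoc7 : a₃₂ * a₄₃ * b₄ * c₂ = 1 / 24)
    (M : ℝ) (hM : 0 ≤ M) :
    ∀ ε > 0, ∃ N₀ : ℕ, ∀ N : ℕ, N₀ ≤ N → 1 ≤ N →
      ∀ e₂ e₃ e₄ : ℕ → ℝ,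
      (∀ n < N, |e₂ n| ≤ M) → (∀ n < N, |e₃ n| ≤ M) → (∀ n < N, |e₄ n| ≤ M) →
      ∀ v k₁ k₂ k₃ k₄ : ℕ → ℝ, v 0 = u a →
      (∀ n < N, k₁ n = f (a + n * ((b - a) / N)) (v n)) →
      (∀ n < N, k₂ n = f (a + n * ((b - a) / N) + c₂ * ((b - a) / N))
          (v n * Real.exp (-(e₂ n) * (c₂ * ((b - a) / N)) ^ 2)
            + ((b - a) / N) * (a₂₁ * k₁ n))) →
      (∀ n < N, k₃ n = f (a + n * ((b - a) / N) + c₃ * ((b - a) / N))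
          (v n * Real.exp (-(e₃ n) * (c₃ * ((b - a) / N)) ^ 2)
            + ((b - a) / N) * (a₃₁ * k₁ n + a₃₂ * k₂ n))) →
      (∀ n < N, k₄ n = f (a + n * ((b - a) / N) + c₄ * ((b - a) / N))
          (v n * Real.exp (-(e₄ n) * (c₄ * ((b - a) / N)) ^ 2)
            + ((b - a) / N) * (a₄₁ * k₁ n + a₄₂ * k₂ n + a₄₃ * k₃ n))) →
      (∀ n < N,
        v (n + 1) = v n + ((b - a) / N) *
          (b₁ * k₁ n + b₂ * k₂ n + b₃ * k₃ n + b₄ * k₄ n)) →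
      ∀ n ≤ N, |v n - u (a + n * ((b - a) / N))| < ε :=
  rbf_conv a b L hab f hfc hlip u hu b₁ b₂ b₃ b₄ c₂ c₃ c₄ a₂₁ a₃₁ a₃₂ a₄₁ a₄₂ a₄₃ hb M hM
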